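/- (Asymptotics as y → +∞.) Let 1 ≤ i ≤ M and c = k_i + k_{N−M+i}. Then: (a) for every ε > 0 there exists Ξ such that for every ξ ≤ −Ξ there exists Y with |w_1(c·y + ξ, y) − (Σ_{j=1}^{i−1} k_j + Σ_{j=N−M+i}^{N} k_j)| < ε for all y ≥ Y; (b) for every ε > 0 there exists Ξ such that for every ξ ≥ Ξ there exists Y with |w_1(c·y + ξ, y) − (Σ_{j=1}^{i} k_j + Σ_{j=N−M+i+1}^{N} k_j)| < ε for all y ≥ Y. In other words, along x = c y + ξ with y → +∞, w_1 → Σ_{j=1}^{i−1} k_j + Σ_{j=N−M+i}^{N} k_j as ξ → −∞ and w_1 → Σ_{j=1}^{i} k_j + Σ_{j=N−M+i+1}^{N} k_j as ξ → +∞. -/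

import Mathlib

open Filter Finset

lemma tendsto_exp_mul_atTop_nhds_zero' {a : ℝ} (ha : a < 0) :
    Tendsto (fun t : ℝ => Real.exp (a * t)) atTop (nhds 0) :=
  Real.tendsto_exp_atBot.comp (Tendsto.const_mul_atTop_of_neg ha tendsto_id)

lemma core_weighted {ι : Type} (𝒮 : Finset ι) (S₀ : ι) (h₀ : S₀ ∈ 𝒮)
    (d g v κ : ι → ℝ) (hd : ∀ S ∈ 𝒮, 0 < d S)
    (hcomp : ∀ S ∈ 𝒮, S ≠ S₀ → g S < g S₀ ∨ (g S = g S₀ ∧ v S < v S₀))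
    (ε : ℝ) (hε : 0 < ε) :
    ∃ Ξ : ℝ, ∀ ξ ≥ Ξ, ∃ Y : ℝ, ∀ y ≥ Y,
      |(∑ S ∈ 𝒮, κ S * (d S * Real.exp (g S * y + v S * ξ))) /
        (∑ S ∈ 𝒮, d S * Real.exp (g S * y + v S * ξ)) - κ S₀| < ε := by
  classical
  set 𝒮' := 𝒮.erase S₀ with h𝒮'
  set C := ∑ S ∈ 𝒮', |κ S - κ S₀| with hCdef
  have hC0 : 0 ≤ C := Finset.sum_nonneg fun _ _ => abs_nonneg _
  have hd₀ : 0 < d S₀ := hd S₀ h₀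
  set ε₁ := ε / (C + 1) with hε₁def
  have hε₁ : 0 < ε₁ := by positivity
  set D := 𝒮'.filter (fun S => g S = g S₀) with hD
  have hLten : Tendsto (fun ξ => ∑ S ∈ D, (d S / d S₀) * Real.exp ((v S - v S₀) * ξ))
      atTop (nhds 0) := by
    have h0 : (0:ℝ) = ∑ S ∈ D, (0:ℝ) := by simp
    rw [h0]
    refine tendsto_finset_sum _ (fun S hS => ?_)
    have hS' : S ∈ 𝒮' := (Finset.mem_filter.1 hS).1
    have hgeq : g S = g S₀ := (Finset.mem_filter.1 hS).2
    have hSmem : S ∈ 𝒮 := Finset.mem_of_mem_erase hS'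
    have hne : S ≠ S₀ := Finset.ne_of_mem_erase hS'
    have hv : v S - v S₀ < 0 := by
      rcases hcomp S hSmem hne with h | h
      · exact absurd hgeq h.ne
      · linarith [h.2]
    have := (tendsto_exp_mul_atTop_nhds_zero' hv).const_mul (d S / d S₀)
    simpa using this
  obtain ⟨Ξ, hΞ⟩ : ∃ Ξ, ∀ ξ ≥ Ξ,
      (∑ S ∈ D, (d S / d S₀) * Real.exp ((v S - v S₀) * ξ)) < ε₁ / 2 :=
    eventually_atTop.1 (hLten.eventually_lt_const (by positivity))
  refine ⟨Ξ, fun ξ hξ => ?_⟩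
  set e : ι → ℝ := fun S => (d S / d S₀) * Real.exp ((v S - v S₀) * ξ) with he
  have heps : ∑ S ∈ D, e S < ε₁ / 2 := hΞ ξ hξ
  have hlval : (∑ S ∈ 𝒮', if g S = g S₀ then e S else 0) < ε₁ := by
    rw [← Finset.sum_filter]
    calc ∑ S ∈ D, e S < ε₁ / 2 := heps
      _ < ε₁ := by linarith
  have hRten : Tendsto (fun y => ∑ S ∈ 𝒮', e S * Real.exp ((g S - g S₀) * y)) atTop
      (nhds (∑ S ∈ 𝒮', if g S = g S₀ then e S else 0)) := by
    refine tendsto_finset_sum _ (fun S hS => ?_)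
    by_cases hg : g S = g S₀
    · simp only [hg, if_pos, sub_self, zero_mul, Real.exp_zero, mul_one]
      exact tendsto_const_nhds
    · simp only [hg, if_neg, not_false_iff]
      have hglt : g S - g S₀ < 0 := by
        rcases hcomp S (Finset.mem_of_mem_erase hS) (Finset.ne_of_mem_erase hS) with h | h
        · linarith
        · exact absurd h.1 hg
      have := (tendsto_exp_mul_atTop_nhds_zero' hglt).const_mul (e S)
      simpa using this
  obtain ⟨Y, hY⟩ := eventually_atTop.1 (hRten.eventually_lt_const hlval)
  refine ⟨Y, fun y hy => ?_⟩
  have hRy : ∑ S ∈ 𝒮', e S * Real.exp ((g S - g S₀) * y) < ε₁ := hY y hy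
  set A : ι → ℝ := fun S => d S * Real.exp (g S * y + v S * ξ) with hA
  have hApos : ∀ S ∈ 𝒮, 0 < A S := fun S hS => mul_pos (hd S hS) (Real.exp_pos _)
  have hAsum : 0 < ∑ S ∈ 𝒮, A S := Finset.sum_pos hApos ⟨S₀, h₀⟩
  have hA₀ : 0 < A S₀ := hApos S₀ h₀
  have hA₀le : A S₀ ≤ ∑ S ∈ 𝒮, A S := Finset.single_le_sum (fun S hS => (hApos S hS).le) h₀
  have hRterm : ∀ S ∈ 𝒮', 0 ≤ e S * Real.exp ((g S - g S₀) * y) := by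
    intro S hS
    have := hd S (Finset.mem_of_mem_erase hS)
    positivity
  have hratio : ∀ S, A S / A S₀ = e S * Real.exp ((g S - g S₀) * y) := by
    intro S
    simp only [hA, he]
    have h1 : Real.exp (g S * y + v S * ξ)
        = Real.exp ((v S - v S₀) * ξ) * Real.exp ((g S - g S₀) * y)
          * Real.exp (g S₀ * y + v S₀ * ξ) := by
      rw [← Real.exp_add, ← Real.exp_add]; ring_nf
    rw [h1]
    field_simp
  have hnumeq : (∑ S ∈ 𝒮, κ S * A S) / (∑ S ∈ 𝒮, A S) - κ S₀
      = (∑ S ∈ 𝒮, (κ S - κ S₀) * A S) / (∑ S ∈ 𝒮, A S) := by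
    have h2 : ∑ S ∈ 𝒮, (κ S - κ S₀) * A S
        = (∑ S ∈ 𝒮, κ S * A S) - κ S₀ * ∑ S ∈ 𝒮, A S := by
      rw [Finset.mul_sum, ← Finset.sum_sub_distrib]
      exact Finset.sum_congr rfl fun S _ => by ring
    rw [h2, sub_div, mul_div_assoc, div_self hAsum.ne', mul_one]
  have habs : |∑ S ∈ 𝒮, (κ S - κ S₀) * A S| ≤ ∑ S ∈ 𝒮', |κ S - κ S₀| * A S := by
    calc |∑ S ∈ 𝒮, (κ S - κ S₀) * A S| ≤ ∑ S ∈ 𝒮, |(κ S - κ S₀) * A S| :=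
        Finset.abs_sum_le_sum_abs _ _
      _ = ∑ S ∈ 𝒮, |κ S - κ S₀| * A S := Finset.sum_congr rfl fun S hS => by
          rw [abs_mul, abs_of_pos (hApos S hS)]
      _ = ∑ S ∈ 𝒮', |κ S - κ S₀| * A S := (Finset.sum_erase _ (by simp)).symm
  have hnn : 0 ≤ ∑ S ∈ 𝒮', |κ S - κ S₀| * A S :=
    Finset.sum_nonneg fun S hS =>
      mul_nonneg (abs_nonneg _) (hApos S (Finset.mem_of_mem_erase hS)).le
  have hsum2 : (∑ S ∈ 𝒮', |κ S - κ S₀| * A S) / A S₀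
      = ∑ S ∈ 𝒮', |κ S - κ S₀| * (e S * Real.exp ((g S - g S₀) * y)) := by
    rw [Finset.sum_div]
    exact Finset.sum_congr rfl fun S _ => by rw [mul_div_assoc, hratio S]
  have hbound : ∑ S ∈ 𝒮', |κ S - κ S₀| * (e S * Real.exp ((g S - g S₀) * y))
      ≤ C * (∑ S ∈ 𝒮', e S * Real.exp ((g S - g S₀) * y)) := by
    rw [hCdef, Finset.sum_mul]
    exact Finset.sum_le_sum fun S hS =>
      mul_le_mul_of_nonneg_left (Finset.single_le_sum hRterm hS) (abs_nonneg _)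
  have hfinal : C * (∑ S ∈ 𝒮', e S * Real.exp ((g S - g S₀) * y)) < ε := by
    have h3 : C * (∑ S ∈ 𝒮', e S * Real.exp ((g S - g S₀) * y)) ≤ C * ε₁ :=
      mul_le_mul_of_nonneg_left hRy.le hC0
    have h5 : C / (C + 1) < 1 := by rw [div_lt_one (by linarith)]; linarith
    have h4 : C * ε₁ < ε := by
      calc C * ε₁ = (C / (C + 1)) * ε := by rw [hε₁def]; ring
        _ < 1 * ε := mul_lt_mul_of_pos_right h5 hε
        _ = ε := one_mul ε
    linarith
  calc |(∑ S ∈ 𝒮, κ S * A S) / (∑ S ∈ 𝒮, A S) - κ S₀|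
      = |∑ S ∈ 𝒮, (κ S - κ S₀) * A S| / (∑ S ∈ 𝒮, A S) := by
        rw [hnumeq, abs_div, abs_of_pos hAsum]
    _ ≤ (∑ S ∈ 𝒮', |κ S - κ S₀| * A S) / (∑ S ∈ 𝒮, A S) := by gcongr
    _ ≤ (∑ S ∈ 𝒮', |κ S - κ S₀| * A S) / A S₀ := by gcongr
    _ = ∑ S ∈ 𝒮', |κ S - κ S₀| * (e S * Real.exp ((g S - g S₀) * y)) := hsum2
    _ ≤ C * (∑ S ∈ 𝒮', e S * Real.exp ((g S - g S₀) * y)) := hbound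
    _ < ε := hfinal

theorem w1_asymptotics_y_to_pos_infty
    (N : ℕ) (hN : 2 ≤ N)
    (M : ℕ) (hM1 : 1 ≤ M) (hM2 : M ≤ N - 1)
    (k θ0 : ℕ → ℝ)
    (hk : ∀ a b, 1 ≤ a → a < b → b ≤ N → k a < k b)
    (θ : ℕ → ℝ → ℝ → ℝ)
    (hθ : ∀ i x y, θ i x y = -(k i) * x + (k i) ^ 2 * y + θ0 i)
    (Δ : Finset ℕ → ℝ)
    (hΔ : ∀ S, Δ S = ∏ j ∈ S, ∏ l ∈ S.filter (fun l => j < l), (k j - k l) ^ 2)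
    (τ : ℝ → ℝ → ℝ)
    (hτ : ∀ x y, τ x y = ∑ S ∈ Finset.powersetCard M (Finset.Icc 1 N),
        Δ S * Real.exp (∑ j ∈ S, θ j x y))
    (w1 : ℝ → ℝ → ℝ)
    (hw1 : ∀ x y, w1 x y = -(deriv (fun x' => τ x' y) x) / τ x y)
    (i : ℕ) (hi1 : 1 ≤ i) (hi2 : i ≤ M)
    (c : ℝ) (hc : c = k i + k (N - M + i)) :
    (∀ ε > (0 : ℝ), ∃ Ξ : ℝ, ∀ ξ ≤ -Ξ, ∃ Y : ℝ, ∀ y ≥ Y,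
        |w1 (c * y + ξ) y -
          ((∑ j ∈ Finset.Icc 1 (i - 1), k j) + ∑ j ∈ Finset.Icc (N - M + i) N, k j)| < ε) ∧
    (∀ ε > (0 : ℝ), ∃ Ξ : ℝ, ∀ ξ ≥ Ξ, ∃ Y : ℝ, ∀ y ≥ Y,
        |w1 (c * y + ξ) y -
          ((∑ j ∈ Finset.Icc 1 i, k j) + ∑ j ∈ Finset.Icc (N - M + i + 1) N, k j)| < ε) := by
  classical
  set q := N - M + i with hqdef
  have hbounds : 1 ≤ i ∧ i + 1 ≤ q ∧ q ≤ N := by omega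
  obtain ⟨hi1', hiq, hqN⟩ := hbounds
  set 𝒮 := Finset.powersetCard M (Finset.Icc 1 N) with h𝒮
  -- index-to-value facts
  have hkij : ∀ a b : ℕ, 1 ≤ a → a ≤ N → 1 ≤ b → b ≤ N → a ≠ b → k a ≠ k b := by
    intro a b ha1 haN hb1 hbN hab
    rcases Nat.lt_or_ge a b with h | h
    · exact (hk a b ha1 h hbN).ne
    · exact (hk b a hb1 (by omega) haN).ne'
  set f : ℕ → ℝ := fun j => (k j) ^ 2 - c * k j + k i * k q with hfdef
  have hfactor : ∀ j, f j = (k j - k i) * (k j - k q) := by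
    intro j; simp only [hfdef, hc]; ring
  have hfpos : ∀ j, 1 ≤ j → j ≤ N → (j < i ∨ q < j) → 0 < f j := by
    intro j h1 h2 h3
    rw [hfactor]
    rcases h3 with h | h
    · have hki : k j < k i := hk j i h1 h (by omega)
      have hkq : k j < k q := hk j q h1 (by omega) hqN
      exact mul_pos_of_neg_of_neg (by linarith) (by linarith)
    · have hki : k i < k j := hk i j hi1 (by omega) h2
      have hkq : k q < k j := hk q j (by omega) h h2
      exact mul_pos (by linarith) (by linarith)
  have hfi : f i = 0 := by rw [hfactor, sub_self, zero_mul]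
  have hfq : f q = 0 := by rw [hfactor, sub_self, mul_zero]
  have hfnonpos : ∀ j, 1 ≤ j → j ≤ N → i ≤ j → j ≤ q → f j ≤ 0 := by
    intro j h1 h2 h3 h4
    rcases eq_or_lt_of_le h3 with h | h
    · rw [← h, hfi]
    rcases eq_or_lt_of_le h4 with h' | h'
    · rw [h', hfq]
    have hki : k i < k j := hk i j hi1 h h2
    have hkq : k j < k q := hk j q h1 h' hqN
    rw [hfactor]
    nlinarith
  have hfzero_iff : ∀ j, 1 ≤ j → j ≤ N → f j = 0 → j = i ∨ j = q := by
    intro j h1 h2 h3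
    rw [hfactor] at h3
    rcases mul_eq_zero.1 h3 with h | h
    · left
      by_contra hne
      exact hkij j i h1 h2 hi1 (by omega) hne (by linarith)
    · right
      by_contra hne
      exact hkij j q h1 h2 (by omega) hqN hne (by linarith)
  -- the distinguished sets
  set P : Finset ℕ := Finset.Icc 1 (i - 1) ∪ Finset.Icc (q + 1) N with hPdef
  set Sm : Finset ℕ := Finset.Icc 1 (i - 1) ∪ Finset.Icc q N with hSmdef
  set Sp : Finset ℕ := Finset.Icc 1 i ∪ Finset.Icc (q + 1) N with hSpdef
  have hPmem : ∀ j, j ∈ P ↔ (1 ≤ j ∧ j ≤ i - 1) ∨ (q + 1 ≤ j ∧ j ≤ N) := by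
    intro j; simp [hPdef, Finset.mem_union, Finset.mem_Icc]
  have hSmmem' : ∀ j, j ∈ Sm ↔ (1 ≤ j ∧ j ≤ i - 1) ∨ (q ≤ j ∧ j ≤ N) := by
    intro j; simp [hSmdef, Finset.mem_union, Finset.mem_Icc]
  have hSpmem' : ∀ j, j ∈ Sp ↔ (1 ≤ j ∧ j ≤ i) ∨ (q + 1 ≤ j ∧ j ≤ N) := by
    intro j; simp [hSpdef, Finset.mem_union, Finset.mem_Icc]
  have hqP : q ∉ P := by rw [hPmem]; omega
  have hiP : i ∉ P := by rw [hPmem]; omega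
  have hSmP : Sm = insert q P := by
    ext j; rw [hSmmem', Finset.mem_insert, hPmem]; omega
  have hSpP : Sp = insert i P := by
    ext j; rw [hSpmem', Finset.mem_insert, hPmem]; omega
  have hPcard : P.card = M - 1 := by
    rw [hPdef, Finset.card_union_of_disjoint, Nat.card_Icc, Nat.card_Icc]
    · omega
    · rw [Finset.disjoint_left]
      intro a ha hb
      rw [Finset.mem_Icc] at ha hb
      omega
  have hSmcard : Sm.card = M := by
    rw [hSmP, Finset.card_insert_of_notMem hqP, hPcard]; omega
  have hSpcard : Sp.card = M := by
    rw [hSpP, Finset.card_insert_of_notMem hiP, hPcard]; omega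
  have hSmS : Sm ∈ 𝒮 := by
    rw [h𝒮, Finset.mem_powersetCard]
    refine ⟨fun j hj => ?_, hSmcard⟩
    rw [hSmmem'] at hj; rw [Finset.mem_Icc]; omega
  have hSpS : Sp ∈ 𝒮 := by
    rw [h𝒮, Finset.mem_powersetCard]
    refine ⟨fun j hj => ?_, hSpcard⟩
    rw [hSpmem'] at hj; rw [Finset.mem_Icc]; omega
  -- sum functions
  set κf : Finset ℕ → ℝ := fun S => ∑ j ∈ S, k j with hκdef
  set F : Finset ℕ → ℝ := fun S => ∑ j ∈ S, f j with hFdef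
  have hFSm : F Sm = ∑ j ∈ P, f j := by
    rw [hFdef]; simp only [hSmP]
    rw [Finset.sum_insert hqP, hfq, zero_add]
  have hFSp : F Sp = ∑ j ∈ P, f j := by
    rw [hFdef]; simp only [hSpP]
    rw [Finset.sum_insert hiP, hfi, zero_add]
  -- main combinatorial lemma
  have hkey : ∀ S ∈ 𝒮, F S ≤ F Sm ∧ (F S = F Sm → S = Sm ∨ S = Sp) := by
    intro S hS
    rw [h𝒮, Finset.mem_powersetCard] at hS
    obtain ⟨hSsub, hScard⟩ := hS
    have hSN : ∀ j ∈ S, 1 ≤ j ∧ j ≤ N := by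
      intro j hj; have := hSsub hj; rwa [Finset.mem_Icc] at this
    have hd1 : ∑ j ∈ S ∩ P, f j + ∑ j ∈ S \ P, f j = ∑ j ∈ S, f j :=
      Finset.sum_inter_add_sum_sdiff _ _ _
    have hle1 : ∑ j ∈ S ∩ P, f j ≤ ∑ j ∈ P, f j := by
      refine Finset.sum_le_sum_of_subset_of_nonneg (Finset.inter_subset_right) ?_
      intro j hj _
      rw [hPmem] at hj
      exact (hfpos j (by omega) (by omega) (by omega)).le
    have hle2 : ∀ j ∈ S \ P, f j ≤ 0 := by
      intro j hj
      rw [Finset.mem_sdiff, hPmem] at hj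
      obtain ⟨hj1, hj2⟩ := hj
      obtain ⟨hj3, hj4⟩ := hSN j hj1
      exact hfnonpos j hj3 hj4 (by omega) (by omega)
    have hle2' : ∑ j ∈ S \ P, f j ≤ 0 := Finset.sum_nonpos hle2
    constructor
    · rw [hFSm]; simp only [hFdef]; linarith
    · intro heq
      rw [hFSm] at heq
      simp only [hFdef] at heq
      have heq1 : ∑ j ∈ S ∩ P, f j = ∑ j ∈ P, f j := by linarith
      have heq2 : ∑ j ∈ S \ P, f j = 0 := by linarith
      have hPsub : P ⊆ S := by
        by_contra hns
        obtain ⟨a, haP, haS⟩ := Finset.not_subset.1 hns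
        have hsd : ∑ j ∈ P \ (S ∩ P), f j = 0 := by
          have := Finset.sum_sdiff (f := f) (Finset.inter_subset_right : S ∩ P ⊆ P)
          linarith [this]
        have hpos : 0 < ∑ j ∈ P \ (S ∩ P), f j := by
          refine Finset.sum_pos ?_ ⟨a, ?_⟩
          · intro j hj
            have hjP : j ∈ P := (Finset.mem_sdiff.1 hj).1
            rw [hPmem] at hjP
            exact hfpos j (by omega) (by omega) (by omega)
          · rw [Finset.mem_sdiff, Finset.mem_inter]
            exact ⟨haP, fun h => haS h.1⟩
        linarith
      have hdiffsub : S \ P ⊆ {i, q} := by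
        intro j hj
        have hf0 : f j = 0 := (Finset.sum_eq_zero_iff_of_nonpos hle2).1 heq2 j hj
        have hjS : j ∈ S := (Finset.mem_sdiff.1 hj).1
        obtain ⟨hj3, hj4⟩ := hSN j hjS
        rcases hfzero_iff j hj3 hj4 hf0 with h | h <;> simp [h]
      have h6 : (S \ P).card = 1 := by
        rw [Finset.card_sdiff_of_subset hPsub, hScard, hPcard]; omega
      obtain ⟨a, ha⟩ := Finset.card_eq_one.1 h6
      have haiq : a = i ∨ a = q := by
        have := hdiffsub (ha ▸ Finset.mem_singleton_self a)
        simpa using this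
      have hSeq : S = P ∪ {a} := by
        rw [← ha]
        exact (Finset.union_sdiff_of_subset hPsub).symm
      rcases haiq with h | h
      · right
        rw [hSeq, h, hSpP]
        ext j
        simp only [Finset.mem_union, Finset.mem_singleton, Finset.mem_insert]
        tauto
      · left
        rw [hSeq, h, hSmP]
        ext j
        simp only [Finset.mem_union, Finset.mem_singleton, Finset.mem_insert]
        tauto
  -- positivity of coefficients
  set pf : Finset ℕ → ℝ := fun S => ∑ j ∈ S, θ0 j with hpdef
  set df : Finset ℕ → ℝ := fun S => Δ S * Real.exp (pf S) with hddef
  set gf : Finset ℕ → ℝ := fun S => F S - (M : ℝ) * (k i * k q) with hgdef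
  have hΔpos : ∀ S ∈ 𝒮, 0 < Δ S := by
    intro S hS
    rw [h𝒮, Finset.mem_powersetCard] at hS
    obtain ⟨hSsub, _⟩ := hS
    rw [hΔ]
    refine Finset.prod_pos fun j hj => Finset.prod_pos fun l hl => ?_
    rw [Finset.mem_filter] at hl
    have hjN := Finset.mem_Icc.1 (hSsub hj)
    have hlN := Finset.mem_Icc.1 (hSsub hl.1)
    exact pow_two_pos_of_ne_zero (sub_ne_zero.2 (hk j l hjN.1 hl.2 hlN.2).ne)
  have hdpos : ∀ S ∈ 𝒮, 0 < df S := fun S hS => mul_pos (hΔpos S hS) (Real.exp_pos _)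
  -- κ values
  have hκSm : κf Sm = (∑ j ∈ Finset.Icc 1 (i - 1), k j) + ∑ j ∈ Finset.Icc q N, k j := by
    rw [hκdef]; simp only [hSmdef]
    refine Finset.sum_union ?_
    rw [Finset.disjoint_left]
    intro a ha hb
    rw [Finset.mem_Icc] at ha hb
    omega
  have hκSp : κf Sp = (∑ j ∈ Finset.Icc 1 i, k j) + ∑ j ∈ Finset.Icc (q + 1) N, k j := by
    rw [hκdef]; simp only [hSpdef]
    refine Finset.sum_union ?_
    rw [Finset.disjoint_left]
    intro a ha hb
    rw [Finset.mem_Icc] at ha hb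
    omega
  have hκlt : κf Sp < κf Sm := by
    have h1 : κf Sm = k q + ∑ j ∈ P, k j := by
      rw [hκdef]; simp only [hSmP]; rw [Finset.sum_insert hqP]
    have h2 : κf Sp = k i + ∑ j ∈ P, k j := by
      rw [hκdef]; simp only [hSpP]; rw [Finset.sum_insert hiP]
    have := hk i q hi1 (by omega) hqN
    linarith
  -- derivative
  have hτderiv : ∀ x y, deriv (fun x' => τ x' y) x
      = ∑ S ∈ 𝒮, (-(κf S)) * (Δ S * Real.exp (∑ j ∈ S, θ j x y)) := by
    intro x y
    have hfun : (fun x' => τ x' y) = fun x' => ∑ S ∈ 𝒮, Δ S * Real.exp (∑ j ∈ S, θ j x' y) :=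
      funext fun x' => hτ x' y
    rw [hfun]
    refine HasDerivAt.deriv (HasDerivAt.fun_sum fun S _ => ?_)
    have hlin : ∀ x', ∑ j ∈ S, θ j x' y
        = (-(κf S)) * x' + ∑ j ∈ S, ((k j) ^ 2 * y + θ0 j) := by
      intro x'
      rw [Finset.sum_congr rfl (fun j (_ : j ∈ S) =>
        show θ j x' y = -k j * x' + (k j ^ 2 * y + θ0 j) by rw [hθ]; ring)]
      rw [Finset.sum_add_distrib, ← Finset.sum_mul, Finset.sum_neg_distrib]
    have h1 : HasDerivAt (fun x' => (-(κf S)) * x' + ∑ j ∈ S, ((k j) ^ 2 * y + θ0 j))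
        (-(κf S)) x := by
      simpa using ((hasDerivAt_id x).const_mul (-(κf S))).add_const
        (∑ j ∈ S, ((k j) ^ 2 * y + θ0 j))
    have h2 := (h1.exp).const_mul (Δ S)
    have hfun2 : (fun x' => Δ S * Real.exp (∑ j ∈ S, θ j x' y))
        = fun x' => Δ S * Real.exp ((-(κf S)) * x' + ∑ j ∈ S, ((k j) ^ 2 * y + θ0 j)) :=
      funext fun x' => by rw [hlin x']
    rw [hfun2, hlin x]
    exact h2.congr_deriv (by ring)
  -- term rewriting along the line x = c y + ξ
  have hterm : ∀ S ∈ 𝒮, ∀ ξ y : ℝ,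
      Δ S * Real.exp (∑ j ∈ S, θ j (c * y + ξ) y)
        = df S * Real.exp (gf S * y + (-(κf S)) * ξ) := by
    intro S hS ξ y
    rw [h𝒮, Finset.mem_powersetCard] at hS
    obtain ⟨_, hScard⟩ := hS
    have h1 : ∑ j ∈ S, θ j (c * y + ξ) y = gf S * y + (-(κf S)) * ξ + pf S := by
      have hterms : ∀ j ∈ S, θ j (c * y + ξ) y
          = (f j - k i * k q) * y + (-(k j)) * ξ + θ0 j := by
        intro j _
        rw [hθ]
        simp only [hfdef]
        ring
      rw [Finset.sum_congr rfl hterms, Finset.sum_add_distrib, Finset.sum_add_distrib,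
        ← Finset.sum_mul, ← Finset.sum_mul, Finset.sum_sub_distrib, Finset.sum_const,
        hScard]
      simp only [hgdef, hκdef, hpdef, hFdef, nsmul_eq_mul, ← Finset.sum_neg_distrib]
    rw [h1, Real.exp_add, hddef]
    ring
  -- value of w1 along the line
  have hwval : ∀ ξ y : ℝ, w1 (c * y + ξ) y
      = (∑ S ∈ 𝒮, κf S * (df S * Real.exp (gf S * y + (-(κf S)) * ξ)))
        / (∑ S ∈ 𝒮, df S * Real.exp (gf S * y + (-(κf S)) * ξ)) := by
    intro ξ y
    rw [hw1, hτderiv, hτ]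
    congr 1
    · rw [← Finset.sum_neg_distrib]
      refine Finset.sum_congr rfl fun S hS => ?_
      rw [← hterm S hS ξ y]
      ring
    · exact Finset.sum_congr rfl fun S hS => hterm S hS ξ y
  have hgle : ∀ S ∈ 𝒮, gf S ≤ gf Sm := by
    intro S hS
    have := (hkey S hS).1
    simp only [hgdef]
    linarith
  have hgeqc : ∀ S ∈ 𝒮, gf S = gf Sm → S = Sm ∨ S = Sp := by
    intro S hS h
    apply (hkey S hS).2
    simp only [hgdef] at h
    linarith
  have hgSpSm : gf Sp = gf Sm := by simp only [hgdef]; rw [hFSm, hFSp]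
  constructor
  · -- part (a): ξ → −∞, dominant set Sm
    intro ε hε
    have hcomp : ∀ S ∈ 𝒮, S ≠ Sm → gf S < gf Sm ∨ (gf S = gf Sm ∧ κf S < κf Sm) := by
      intro S hS hne
      rcases eq_or_lt_of_le (hgle S hS) with heq | hlt
      · right
        refine ⟨heq, ?_⟩
        rcases hgeqc S hS heq with h | h
        · exact absurd h hne
        · rw [h]; exact hκlt
      · left; exact hlt
    obtain ⟨Ξ, hΞ⟩ := core_weighted 𝒮 Sm hSmS df gf κf κf hdpos hcomp ε hε
    refine ⟨Ξ, fun ξ hξ => ?_⟩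
    obtain ⟨Y, hY⟩ := hΞ (-ξ) (by linarith)
    refine ⟨Y, fun y hy => ?_⟩
    have h0 := hY y hy
    rw [hwval ξ y, ← hκSm]
    have hx : ∀ S : Finset ℕ, gf S * y + (-(κf S)) * ξ = gf S * y + κf S * (-ξ) :=
      fun S => by ring
    simp only [hx]
    exact h0
  · -- part (b): ξ → +∞, dominant set Sp
    intro ε hε
    have hcomp : ∀ S ∈ 𝒮, S ≠ Sp → gf S < gf Sp ∨ (gf S = gf Sp ∧ -(κf S) < -(κf Sp)) := by
      intro S hS hne
      rcases eq_or_lt_of_le (hgle S hS) with heq | hlt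
      · right
        refine ⟨heq.trans hgSpSm.symm, ?_⟩
        rcases hgeqc S hS heq with h | h
        · rw [h]; linarith [hκlt]
        · exact absurd h hne
      · left; rw [hgSpSm]; exact hlt
    obtain ⟨Ξ, hΞ⟩ := core_weighted 𝒮 Sp hSpS df gf (fun S => -(κf S)) κf hdpos hcomp ε hε
    refine ⟨Ξ, fun ξ hξ => ?_⟩
    obtain ⟨Y, hY⟩ := hΞ ξ hξ
    refine ⟨Y, fun y hy => ?_⟩
    have h0 := hY y hy
    rw [hwval ξ y, ← hκSp]
    exact h0
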